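/- arXiv:1904.12199 — 2 statements merged into one kernel-verified Lean document; each statement's English description precedes it below -/
import Mathlib

section
/- Let R ∈ ℂⁿˣⁿ be Hermitian, let v ∈ ℂⁿ be unit-modulus, and assume all entries of Rv are nonzero. Then the fixed point iteration update v⁺ = unt(Rv) does not decrease the objective value: ‖R · unt(Rv)‖₁ ≥ ‖Rv‖₁. -/
open Matrix

/-- Monotonicity of the fixed point iteration: if `R` is Hermitian, `v` is
unit-modulus, and all entries of `Rv` are nonzero, then
`‖R · unt(Rv)‖₁ ≥ ‖Rv‖₁`. -/
theorem stmt_6 {n : ℕ} (R : Matrix (Fin n) (Fin n) ℂ) (hR : R.IsHermitian)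
    (v : Fin n → ℂ) (hv : ∀ i, ‖v i‖ = 1)
    (hnz : ∀ i, (R *ᵥ v) i ≠ 0) :
    (∑ i, ‖(R *ᵥ fun j => (R *ᵥ v) j / (‖(R *ᵥ v) j‖ : ℂ)) i‖)
      ≥ ∑ i, ‖(R *ᵥ v) i‖ := by
  set a : Fin n → ℂ := R *ᵥ v with ha
  set u : Fin n → ℂ := fun j => a j / (‖a j‖ : ℂ) with hu
  -- key identity: v† R u = ∑ ‖a j‖
  have hcol : ∀ j, (∑ i, star (v i) * R i j) = star (a j) := by
    intro j
    have : ∀ i, star (v i) * R i j = star (R j i * v i) := by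
      intro i
      rw [StarMul.star_mul]
      have h2 : R i j = star (R j i) := by
        conv_lhs => rw [← hR]
        rfl
      rw [h2]
    simp_rw [this, ← star_sum]
    simp [ha, mulVec, dotProduct]
  have key : ∑ i, star (v i) * (R *ᵥ u) i = (∑ j, (‖a j‖ : ℂ)) := by
    simp only [mulVec, dotProduct, Finset.mul_sum]
    rw [Finset.sum_comm]
    refine Finset.sum_congr rfl fun j _ => ?_
    have : ∑ i, star (v i) * (R i j * u j) = (∑ i, star (v i) * R i j) * u j := by
      rw [Finset.sum_mul]; exact Finset.sum_congr rfl fun i _ => by ring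
    rw [this, hcol]
    have hnz' : (‖a j‖ : ℂ) ≠ 0 := by
      simpa using norm_ne_zero_iff.mpr (hnz j)
    simp only [hu]
    rw [← mul_div_assoc, div_eq_iff hnz', mul_comm (star (a j)), Complex.star_def,
      Complex.mul_conj, Complex.normSq_eq_norm_sq]
    push_cast
    ring
  have h1 : ∀ i, (star (v i) * (R *ᵥ u) i).re ≤ ‖(R *ᵥ u) i‖ := by
    intro i
    calc (star (v i) * (R *ᵥ u) i).re ≤ ‖star (v i) * (R *ᵥ u) i‖ := Complex.re_le_norm _
    _ = ‖(R *ᵥ u) i‖ := by rw [norm_mul, norm_star, hv i, one_mul]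
  calc ∑ i, ‖(R *ᵥ u) i‖ ≥ ∑ i, (star (v i) * (R *ᵥ u) i).re :=
        Finset.sum_le_sum fun i _ => h1 i
    _ = (∑ i, star (v i) * (R *ᵥ u) i).re := by rw [← Complex.re_sum]
    _ = ∑ i, ‖a i‖ := by rw [key]; simp
end

section
/- Let R ∈ ℂⁿˣⁿ be Hermitian, and let (v^{(t)})_{t≥0} be a sequence of unit-modulus vectors in ℂⁿ such that for every t, all entries of R v^{(t)} are nonzero and v^{(t+1)} = unt(R v^{(t)}). Then the real sequence t ↦ ‖R v^{(t)}‖₁ is monotone nondecreasing, bounded above by Σᵢ Σⱼ |r_{i,j}|, and hence converges. -/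
open Matrix Filter

private lemma reA (z : ℂ) (hz : z ≠ 0) :
    ((starRingEnd ℂ) (z / (‖z‖ : ℂ)) * z).re = ‖z‖ := by
  have hz' : (‖z‖ : ℂ) ≠ 0 := by
    exact_mod_cast Complex.ofReal_ne_zero.mpr (norm_ne_zero_iff.mpr hz)
  have h : (starRingEnd ℂ) (z / (‖z‖ : ℂ)) * z = (‖z‖ : ℂ) := by
    rw [map_div₀, Complex.conj_ofReal, div_mul_eq_mul_div, Complex.conj_mul',
      sq, mul_div_assoc, div_self hz', mul_one]
  rw [h, Complex.ofReal_re]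

private lemma reB (a b : ℂ) (hb : ‖b‖ = 1) :
    ((starRingEnd ℂ) b * a).re ≤ ‖a‖ := by
  calc ((starRingEnd ℂ) b * a).re ≤ ‖(starRingEnd ℂ) b * a‖ := Complex.re_le_norm _
    _ = ‖b‖ * ‖a‖ := by rw [norm_mul, RingHomIsometric.norm_map]
    _ = ‖a‖ := by rw [hb, one_mul]

/-- For a Hermitian `R` and a sequence of unit-modulus vectors with
`v⁽ᵗ⁺¹⁾ = unt(R v⁽ᵗ⁾)` (all entries of `R v⁽ᵗ⁾` nonzero), the sequence
`t ↦ ‖R v⁽ᵗ⁾‖₁` is monotone nondecreasing, bounded above by `Σᵢ Σⱼ |r_{i,j}|`,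
and hence converges. -/
theorem stmt_8 {n : ℕ} (R : Matrix (Fin n) (Fin n) ℂ) (hR : R.IsHermitian)
    (v : ℕ → Fin n → ℂ) (hv : ∀ t, ∀ i, ‖v t i‖ = 1)
    (hnz : ∀ t, ∀ i, (R *ᵥ v t) i ≠ 0)
    (hit : ∀ t, v (t + 1) = fun i => (R *ᵥ v t) i / (‖(R *ᵥ v t) i‖ : ℂ)) :
    Monotone (fun t => ∑ i, ‖(R *ᵥ v t) i‖) ∧
    (∀ t, (∑ i, ‖(R *ᵥ v t) i‖) ≤ ∑ i, ∑ j, ‖R i j‖) ∧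
    ∃ L : ℝ, Tendsto (fun t => ∑ i, ‖(R *ᵥ v t) i‖) atTop (nhds L) := by
  have hH : ∀ i j, (starRingEnd ℂ) (R j i) = R i j := by
    intro i j
    have := congrFun (congrFun hR i) j
    simpa [Matrix.conjTranspose_apply] using this
  have hmono : Monotone (fun t => ∑ i, ‖(R *ᵥ v t) i‖) := by
    apply monotone_nat_of_le_succ
    intro t
    have key : (∑ i, ‖(R *ᵥ v t) i‖)
        = (∑ j, (starRingEnd ℂ) (v t j) * (R *ᵥ v (t+1)) j).re := by
      have h1 : (∑ i, ‖(R *ᵥ v t) i‖)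
          = (∑ i, (starRingEnd ℂ) (v (t+1) i) * (R *ᵥ v t) i).re := by
        rw [Complex.re_sum]
        refine Finset.sum_congr rfl fun i _ => ?_
        rw [hit t]
        exact (reA _ (hnz t i)).symm
      rw [h1]
      have h2 : (starRingEnd ℂ) (∑ j, (starRingEnd ℂ) (v t j) * (R *ᵥ v (t+1)) j)
          = ∑ i, (starRingEnd ℂ) (v (t+1) i) * (R *ᵥ v t) i := by
        rw [map_sum]
        simp only [Matrix.mulVec, dotProduct, map_sum, _root_.map_mul,
          Complex.conj_conj, Finset.mul_sum, Finset.sum_mul]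
        rw [Finset.sum_comm]
        refine Finset.sum_congr rfl fun i _ => Finset.sum_congr rfl fun j _ => ?_
        rw [hH i j]
        ring
      rw [← h2, Complex.conj_re]
    rw [key, Complex.re_sum]
    exact Finset.sum_le_sum fun j _ => reB _ _ (hv t j)
  have hbdd : ∀ t, (∑ i, ‖(R *ᵥ v t) i‖) ≤ ∑ i, ∑ j, ‖R i j‖ := by
    intro t
    refine Finset.sum_le_sum fun i _ => ?_
    calc ‖(R *ᵥ v t) i‖ = ‖∑ j, R i j * v t j‖ := by
          simp [Matrix.mulVec, dotProduct]
      _ ≤ ∑ j, ‖R i j * v t j‖ := norm_sum_le _ _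
      _ = ∑ j, ‖R i j‖ := by
          refine Finset.sum_congr rfl fun j _ => ?_
          rw [norm_mul, hv t j, mul_one]
  refine ⟨hmono, hbdd, ⟨_, tendsto_atTop_ciSup hmono ⟨∑ i, ∑ j, ‖R i j‖, ?_⟩⟩⟩
  rintro x ⟨t, rfl⟩
  exact hbdd t
end
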